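/- Let (m_τ)_{τ≥1} be independent unbiased estimators of m_true with common variance v, and let λ(t) = 1 - t^{-p} with 0 < p < 1. Define m_t = (1-λ(t)) Σ_{τ=1}^t λ(t)^{t-τ} m_τ. Then E[m_t] → m_true and Var(m_t) → 0 as t → ∞. -/

import Mathlib

open MeasureTheory ProbabilityTheory Filter


private lemma geom_eval (x : ℝ) (t : ℕ) :
    (1 - x) * ∑ i ∈ Finset.range t, x ^ i = 1 - x ^ t := by
  have h := geom_sum_mul x t
  calc (1 - x) * ∑ i ∈ Finset.range t, x ^ i
      = -((∑ i ∈ Finset.range t, x ^ i) * (x - 1)) := by ring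
    _ = -(x ^ t - 1) := by rw [h]
    _ = 1 - x ^ t := by ring

private lemma sum_reindex (x : ℝ) (t : ℕ) :
    ∑ τ ∈ Finset.Icc 1 t, x ^ (t - τ) = ∑ j ∈ Finset.range t, x ^ j := by
  rw [← Finset.Ico_add_one_right_eq_Icc, Finset.sum_Ico_eq_sum_range]
  simp only [Nat.add_sub_cancel]
  rw [← Finset.sum_range_reflect]
  apply Finset.sum_congr rfl
  intro i hi
  simp only [Finset.mem_range] at hi
  congr 1
  omega

/-- With `λ(t) = 1 - t^(-p)`, `0 < p < 1`, the exponentially weighted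
average of independent unbiased estimators has expectation tending to `m_true` and
variance tending to `0` as `t → ∞`. -/
theorem ema_increasing_lambda_consistent
    {Ω : Type*} [MeasurableSpace Ω] (μ : Measure Ω) [IsProbabilityMeasure μ]
    (m : ℕ → Ω → ℝ) (m_true v p : ℝ)
    (hp0 : 0 < p) (hp1 : p < 1)
    (h_indep : iIndepFun m μ)
    (h_meas : ∀ τ, Measurable (m τ))
    (h_L2 : ∀ τ, MemLp (m τ) 2 μ)
    (h_unbiased : ∀ τ, ∫ ω, m τ ω ∂μ = m_true)
    (h_var : ∀ τ, variance (m τ) μ = v)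
    (lam : ℕ → ℝ) (hlam : ∀ t : ℕ, lam t = 1 - (t : ℝ) ^ (-p))
    (M : ℕ → Ω → ℝ)
    (hM : ∀ t ω, M t ω = (1 - lam t) * ∑ τ ∈ Finset.Icc 1 t, lam t ^ (t - τ) * m τ ω) :
    Tendsto (fun t => ∫ ω, M t ω ∂μ) atTop (nhds m_true) ∧
      Tendsto (fun t => variance (M t) μ) atTop (nhds 0) := by
  have hInt : ∀ τ, Integrable (m τ) μ := fun τ => (h_L2 τ).integrable one_le_two
  -- basic facts about lam t for t ≥ 1
  have hlam01 : ∀ t : ℕ, 1 ≤ t → 0 ≤ lam t ∧ lam t < 1 := by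
    intro t ht
    have ht1 : (1 : ℝ) ≤ (t : ℝ) := by exact_mod_cast ht
    have h1 : (t : ℝ) ^ (-p) ≤ 1 :=
      Real.rpow_le_one_of_one_le_of_nonpos ht1 (by linarith)
    have h2 : 0 < (t : ℝ) ^ (-p) := Real.rpow_pos_of_pos (by linarith) _
    rw [hlam]
    constructor <;> linarith
  -- expectation identity
  have hE : ∀ t : ℕ, ∫ ω, M t ω ∂μ = m_true * (1 - lam t ^ t) := by
    intro t
    have hint : ∀ τ ∈ Finset.Icc 1 t,
        Integrable (fun ω => lam t ^ (t - τ) * m τ ω) μ :=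
      fun τ _ => (hInt τ).const_mul _
    calc ∫ ω, M t ω ∂μ
        = ∫ ω, (1 - lam t) * ∑ τ ∈ Finset.Icc 1 t, lam t ^ (t - τ) * m τ ω ∂μ := by
          simp only [hM]
      _ = (1 - lam t) * ∫ ω, ∑ τ ∈ Finset.Icc 1 t, lam t ^ (t - τ) * m τ ω ∂μ := by
          rw [integral_const_mul]
      _ = (1 - lam t) * ∑ τ ∈ Finset.Icc 1 t, ∫ ω, lam t ^ (t - τ) * m τ ω ∂μ := by
          rw [integral_finset_sum _ hint]
      _ = (1 - lam t) * ∑ τ ∈ Finset.Icc 1 t, lam t ^ (t - τ) * m_true := by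
          congr 1
          refine Finset.sum_congr rfl fun τ _ => ?_
          rw [integral_const_mul, h_unbiased]
      _ = m_true * ((1 - lam t) * ∑ τ ∈ Finset.Icc 1 t, lam t ^ (t - τ)) := by
          rw [← Finset.sum_mul]; ring
      _ = m_true * (1 - lam t ^ t) := by rw [sum_reindex, geom_eval]
  -- lam t ^ t → 0
  have hpow0 : Tendsto (fun t : ℕ => lam t ^ t) atTop (nhds 0) := by
    have hub : Tendsto (fun t : ℕ => Real.exp (-((t : ℝ) ^ (1 - p)))) atTop (nhds 0) := by
      apply Real.tendsto_exp_neg_atTop_nhds_zero.comp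
      exact (tendsto_rpow_atTop (by linarith)).comp tendsto_natCast_atTop_atTop
    refine tendsto_of_tendsto_of_tendsto_of_le_of_le' tendsto_const_nhds hub ?_ ?_
    · filter_upwards [eventually_ge_atTop 1] with t ht
      exact pow_nonneg (hlam01 t ht).1 t
    · filter_upwards [eventually_ge_atTop 1] with t ht
      have ht0 : (0 : ℝ) < (t : ℝ) := by exact_mod_cast Nat.lt_of_lt_of_le Nat.zero_lt_one ht
      have h1 : lam t ≤ Real.exp (-((t : ℝ) ^ (-p))) := by
        rw [hlam]
        linarith [Real.add_one_le_exp (-((t : ℝ) ^ (-p)))]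
      have h2 : lam t ^ t ≤ Real.exp (-((t : ℝ) ^ (-p))) ^ t :=
        pow_le_pow_left₀ (hlam01 t ht).1 h1 t
      have h3 : Real.exp (-((t : ℝ) ^ (-p))) ^ t = Real.exp (-((t : ℝ) ^ (1 - p))) := by
        rw [← Real.exp_nat_mul]
        congr 1
        have : (t : ℝ) * (t : ℝ) ^ (-p) = (t : ℝ) ^ (1 - p) := by
          rw [sub_eq_add_neg, Real.rpow_add ht0, Real.rpow_one]
        push_cast
        rw [mul_neg, this]
      rw [h3] at h2
      exact h2
  -- first conclusion
  have hE' : Tendsto (fun t => ∫ ω, M t ω ∂μ) atTop (nhds m_true) := by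
    have : Tendsto (fun t : ℕ => m_true * (1 - lam t ^ t)) atTop (nhds (m_true * (1 - 0))) :=
      tendsto_const_nhds.mul (tendsto_const_nhds.sub hpow0)
    simpa only [sub_zero, mul_one, ← hE] using this
  refine ⟨hE', ?_⟩
  -- variance identity
  have hV : ∀ t : ℕ, variance (M t) μ =
      v * ((1 - lam t) ^ 2 * ∑ j ∈ Finset.range t, (lam t ^ 2) ^ j) := by
    intro t
    set c : ℕ → ℝ := fun τ => (1 - lam t) * lam t ^ (t - τ) with hc
    have hMfun : M t = ∑ τ ∈ Finset.Icc 1 t, (fun ω => c τ * m τ ω) := by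
      funext ω
      rw [hM, Finset.sum_apply, Finset.mul_sum]
      exact Finset.sum_congr rfl fun τ _ => by simp [hc]; ring
    have hL2' : ∀ τ ∈ Finset.Icc 1 t, MemLp (fun ω => c τ * m τ ω) 2 μ :=
      fun τ _ => (h_L2 τ).const_mul _
    have hind : iIndepFun (fun τ => fun ω => c τ * m τ ω) μ :=
      h_indep.comp (fun τ x => c τ * x) (fun τ => measurable_const_mul _)
    have hpair : Set.Pairwise ↑(Finset.Icc 1 t)
        (fun i j => IndepFun (fun ω => c i * m i ω) (fun ω => c j * m j ω) μ) :=
      fun i _ j _ hij => hind.indepFun hij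
    rw [hMfun, IndepFun.variance_sum hL2' hpair]
    have hterm : ∀ τ, variance (fun ω => c τ * m τ ω) μ = c τ ^ 2 * v := by
      intro τ
      have : (fun ω => c τ * m τ ω) = c τ • m τ := rfl
      rw [this, variance_smul, h_var]
    simp only [hterm]
    have : ∀ τ, c τ ^ 2 = (1 - lam t) ^ 2 * (lam t ^ 2) ^ (t - τ) := by
      intro τ
      simp only [hc]
      rw [mul_pow, ← pow_mul, ← pow_mul, Nat.mul_comm]
    calc ∑ τ ∈ Finset.Icc 1 t, c τ ^ 2 * v
        = v * ((1 - lam t) ^ 2 * ∑ τ ∈ Finset.Icc 1 t, (lam t ^ 2) ^ (t - τ)) := by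
          rw [Finset.mul_sum, Finset.mul_sum]
          exact Finset.sum_congr rfl fun τ _ => by rw [this]; ring
      _ = v * ((1 - lam t) ^ 2 * ∑ j ∈ Finset.range t, (lam t ^ 2) ^ j) := by
          rw [sum_reindex]
  have hv0 : 0 ≤ v := h_var 0 ▸ variance_nonneg (m 0) μ
  -- upper bound
  have hub : ∀ t : ℕ, 1 ≤ t → variance (M t) μ ≤ v * (t : ℝ) ^ (-p) := by
    intro t ht
    obtain ⟨hl0, hl1⟩ := hlam01 t ht
    set l := lam t
    set S := ∑ j ∈ Finset.range t, (l ^ 2) ^ j with hS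
    have hS0 : 0 ≤ S := Finset.sum_nonneg fun j _ => pow_nonneg (sq_nonneg l) j
    have hgeom : (1 - l ^ 2) * S = 1 - (l ^ 2) ^ t := geom_eval _ _
    have hlt0 : 0 ≤ (l ^ 2) ^ t := pow_nonneg (sq_nonneg l) t
    have key : (1 - l) ^ 2 * S ≤ 1 - l := by
      nlinarith [mul_nonneg (mul_nonneg (sq_nonneg (1 - l)) hS0) hl0]
    have h1l : 1 - l = (t : ℝ) ^ (-p) := by show 1 - lam t = _; rw [hlam]; ring
    rw [hV t]
    calc v * ((1 - l) ^ 2 * S) ≤ v * (1 - l) := by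
          exact mul_le_mul_of_nonneg_left key hv0
      _ = v * (t : ℝ) ^ (-p) := by rw [h1l]
  have hub' : Tendsto (fun t : ℕ => v * (t : ℝ) ^ (-p)) atTop (nhds 0) := by
    have := (tendsto_rpow_neg_atTop hp0).comp
      (tendsto_natCast_atTop_atTop (R := ℝ))
    simpa using tendsto_const_nhds.mul this
  refine tendsto_of_tendsto_of_tendsto_of_le_of_le' tendsto_const_nhds hub' ?_ ?_
  · filter_upwards with t using variance_nonneg _ _
  · filter_upwards [eventually_ge_atTop 1] with t ht using hub t ht
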